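/- arXiv:2404.05714 — 2 statements merged into one kernel-verified Lean document; each statement's English description precedes it below -/
import Mathlib

section
/- Helstrom bound (success direction): for density matrices ρ, σ with uniform prior, the optimal success probability of discriminating them by a two-outcome POVM {M, I − M} with 0 ≤ M ≤ I equals (1/2)(1 + (1/2)‖ρ − σ‖₁); in particular any discrimination strategy has failure probability at least (1 − (1/2)‖ρ − σ‖₁)/2. -/
open Matrix
open scoped ComplexOrder

/-- Trace norm of a complex matrix: the trace of `√(AᴴA)` (the sum of singular values). -/
noncomputable def traceNorm {d : Type*} [Fintype d] [DecidableEq d] (A : Matrix d d ℂ) : ℝ :=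
  (((Matrix.posSemidef_conjTranspose_mul_self A).1.eigenvectorUnitary : Matrix d d ℂ) *
    diagonal (((↑) : ℝ → ℂ) ∘ (√·) ∘ (Matrix.posSemidef_conjTranspose_mul_self A).1.eigenvalues) *
    (star (Matrix.posSemidef_conjTranspose_mul_self A).1.eigenvectorUnitary : Matrix d d ℂ)).trace.re

section Helpers

variable {d : Type*} [Fintype d] [DecidableEq d]

lemma diag_re_nonneg {N : Matrix d d ℂ} (hN : N.PosSemidef) (i : d) : 0 ≤ (N i i).re := by
  have h := hN.re_dotProduct_nonneg (Pi.single i 1)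
  simpa [dotProduct, mulVec, Pi.single_apply, Finset.mul_sum] using h

open scoped MatrixOrder in
lemma traceNorm_eq_of {A B : Matrix d d ℂ} (hA : A.PosSemidef) (h : A * A = Bᴴ * B) :
    traceNorm B = A.trace.re := by
  have hB := posSemidef_conjTranspose_mul_self B
  have e1 : CFC.sqrt (Bᴴ * B) = A := CFC.sqrt_unique h hA.nonneg
  have e2 : CFC.sqrt (Bᴴ * B) = cfc Real.sqrt (Bᴴ * B) := by
    rw [CFC.sqrt_eq_real_sqrt _ hB.nonneg, cfcₙ_eq_cfc]
  rw [traceNorm, ← e1, e2, hB.1.cfc_eq]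
  rfl

end Helpers

/-- Helstrom bound: for density matrices `ρ, σ` under a uniform prior, the optimal success
probability of a two-outcome POVM `{M, I - M}` equals `(1 + ½‖ρ - σ‖₁)/2`; in particular
every strategy has failure probability at least `(1 - ½‖ρ - σ‖₁)/2`. -/
theorem stmt6 {d : Type*} [Fintype d] [DecidableEq d] (ρ σ : Matrix d d ℂ)
    (hρ : ρ.PosSemidef) (hρ1 : ρ.trace = 1)
    (hσ : σ.PosSemidef) (hσ1 : σ.trace = 1) :
    IsGreatest {psucc : ℝ | ∃ M : Matrix d d ℂ, M.PosSemidef ∧ (1 - M).PosSemidef ∧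
        psucc = ((M * ρ).trace).re / 2 + (((1 - M) * σ).trace).re / 2}
      ((1 + traceNorm (ρ - σ) / 2) / 2) ∧
    ∀ M : Matrix d d ℂ, M.PosSemidef → (1 - M).PosSemidef →
      (1 - traceNorm (ρ - σ) / 2) / 2 ≤
        1 - (((M * ρ).trace).re / 2 + (((1 - M) * σ).trace).re / 2) := by
  classical
  have hΔ : (ρ - σ).IsHermitian := hρ.1.sub hσ.1
  set lam : d → ℝ := hΔ.eigenvalues with hlam
  set U : Matrix d d ℂ := (hΔ.eigenvectorUnitary : Matrix d d ℂ) with hUdef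
  have hUU : Uᴴ * U = 1 := by
    have := mem_unitaryGroup_iff'.mp hΔ.eigenvectorUnitary.2
    rwa [star_eq_conjTranspose] at this
  have hUU' : U * Uᴴ = 1 := by
    have := mem_unitaryGroup_iff.mp hΔ.eigenvectorUnitary.2
    rwa [star_eq_conjTranspose] at this
  have hspec : ρ - σ = U * diagonal (fun i => (lam i : ℂ)) * Uᴴ := by
    have := hΔ.spectral_theorem
    rw [this, Unitary.conjStarAlgAut_apply, star_eq_conjTranspose]; rfl
  -- key trace computation
  have key : ∀ M : Matrix d d ℂ,
      ((M * (ρ - σ)).trace).re = ∑ i, ((Uᴴ * M * U) i i).re * lam i := by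
    intro M
    have h1 : M * (ρ - σ) = (M * U * diagonal (fun i => (lam i : ℂ))) * Uᴴ := by
      rw [hspec]; noncomm_ring
    rw [h1, trace_mul_comm]
    have h2 : Uᴴ * (M * U * diagonal fun i => (lam i : ℂ))
        = (Uᴴ * M * U) * diagonal (fun i => (lam i : ℂ)) := by noncomm_ring
    rw [h2]
    simp only [Matrix.trace, Matrix.diag, Matrix.mul_diagonal, Complex.re_sum]
    congr 1; ext i
    simp [Complex.mul_re]
  -- eigenvalues sum to zero
  have sumlam : ∑ i, lam i = 0 := by
    have h0 : (ρ - σ).trace = 0 := by rw [trace_sub, hρ1, hσ1, sub_self]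
    have h1 : (ρ - σ).trace = ∑ i, (lam i : ℂ) := by
      rw [hspec, trace_mul_cycle, hUU, one_mul, trace_diagonal]
    rw [h0] at h1
    have := congrArg Complex.re h1
    simpa [Complex.re_sum] using this.symm
  -- trace norm equals sum of |eigenvalues|
  have htn : traceNorm (ρ - σ) = ∑ i, |lam i| := by
    set A : Matrix d d ℂ := U * diagonal (fun i => ((|lam i| : ℝ) : ℂ)) * Uᴴ with hA
    have hApsd : A.PosSemidef := by
      have hd : (diagonal (fun i => ((|lam i| : ℝ) : ℂ))).PosSemidef :=
        posSemidef_diagonal_iff.mpr fun i => by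
          simp [Complex.zero_le_real.mpr (abs_nonneg (lam i))]
      exact hd.mul_mul_conjTranspose_same U
    have hsq : A ^ 2 = (ρ - σ)ᴴ * (ρ - σ) := by
      have hc : (ρ - σ)ᴴ = ρ - σ := hΔ
      rw [hc, hspec, hA, pow_two]
      have : U * diagonal (fun i => ((|lam i| : ℝ) : ℂ)) * Uᴴ *
          (U * diagonal (fun i => ((|lam i| : ℝ) : ℂ)) * Uᴴ)
          = U * (diagonal (fun i => ((|lam i| : ℝ) : ℂ)) * (Uᴴ * U) *
            diagonal (fun i => ((|lam i| : ℝ) : ℂ))) * Uᴴ := by noncomm_ring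
      rw [this, hUU, mul_one, diagonal_mul_diagonal]
      have h2 : U * diagonal (fun i => (lam i : ℂ)) * Uᴴ *
          (U * diagonal (fun i => (lam i : ℂ)) * Uᴴ)
          = U * (diagonal (fun i => (lam i : ℂ)) * (Uᴴ * U) *
            diagonal (fun i => (lam i : ℂ))) * Uᴴ := by noncomm_ring
      rw [h2, hUU, mul_one, diagonal_mul_diagonal]
      rw [show (fun i => ((|lam i| : ℝ) : ℂ) * ((|lam i| : ℝ) : ℂ))
          = (fun i => ((lam i : ℝ) : ℂ) * ((lam i : ℝ) : ℂ)) from funext fun i => by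
        rw [← Complex.ofReal_mul, ← Complex.ofReal_mul, abs_mul_abs_self]]
    have hAeq : traceNorm (ρ - σ) = A.trace.re :=
      traceNorm_eq_of hApsd (by rw [← pow_two]; exact hsq)
    rw [hAeq, hA, trace_mul_cycle, hUU, one_mul, trace_diagonal]
    simp [Complex.re_sum]
  -- upper bound on trace (M * (ρ - σ))
  have bound : ∀ M : Matrix d d ℂ, M.PosSemidef → (1 - M).PosSemidef →
      ((M * (ρ - σ)).trace).re ≤ (∑ i, |lam i|) / 2 := by
    intro M hM h1M
    have hN : (Uᴴ * M * U).PosSemidef := hM.conjTranspose_mul_mul_same U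
    have hN' : (Uᴴ * (1 - M) * U).PosSemidef := h1M.conjTranspose_mul_mul_same U
    have hNiub : ∀ i, ((Uᴴ * M * U) i i).re ≤ 1 := by
      intro i
      have h1 : Uᴴ * (1 - M) * U = 1 - Uᴴ * M * U := by
        rw [Matrix.mul_sub, Matrix.mul_one, Matrix.sub_mul, hUU]
      have h2 := diag_re_nonneg (h1 ▸ hN') i
      have h3 : ((1 - Uᴴ * M * U : Matrix d d ℂ) i i).re
          = 1 - ((Uᴴ * M * U) i i).re := by
        simp [Matrix.sub_apply, Matrix.one_apply_eq]
      rw [h3] at h2; linarith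
    rw [key M]
    have hterm : ∀ i, ((Uᴴ * M * U) i i).re * lam i ≤ (lam i + |lam i|) / 2 := by
      intro i
      rcases le_or_gt 0 (lam i) with h | h
      · rw [abs_of_nonneg h]
        have := mul_le_of_le_one_left h (hNiub i)
        linarith
      · rw [abs_of_neg h]
        have h0 := diag_re_nonneg hN i
        nlinarith
    calc ∑ i, ((Uᴴ * M * U) i i).re * lam i ≤ ∑ i, (lam i + |lam i|) / 2 :=
          Finset.sum_le_sum fun i _ => hterm i
      _ = ((∑ i, lam i) + ∑ i, |lam i|) / 2 := by
          rw [← Finset.sum_add_distrib, Finset.sum_div]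
      _ = (∑ i, |lam i|) / 2 := by rw [sumlam]; ring
  -- the optimal measurement
  set M₀ : Matrix d d ℂ :=
    U * diagonal (fun i => if 0 ≤ lam i then (1 : ℂ) else 0) * Uᴴ with hM₀def
  have hM₀psd : M₀.PosSemidef := by
    refine PosSemidef.mul_mul_conjTranspose_same ?_ U
    refine posSemidef_diagonal_iff.mpr fun i => ?_
    split <;> simp
  have h1M₀eq : (1 : Matrix d d ℂ) - M₀
      = U * diagonal (fun i => 1 - if 0 ≤ lam i then (1 : ℂ) else 0) * Uᴴ := by
    have hone : (1 : Matrix d d ℂ) = U * 1 * Uᴴ := by rw [Matrix.mul_one, hUU']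
    rw [hM₀def]
    conv_lhs => rw [hone]
    rw [← diagonal_one, ← Matrix.sub_mul, ← Matrix.mul_sub, diagonal_sub]
  have h1M₀psd : ((1 : Matrix d d ℂ) - M₀).PosSemidef := by
    rw [h1M₀eq]
    refine PosSemidef.mul_mul_conjTranspose_same ?_ U
    refine posSemidef_diagonal_iff.mpr fun i => ?_
    split <;> simp
  have hM₀val : ((M₀ * (ρ - σ)).trace).re = (∑ i, |lam i|) / 2 := by
    rw [key M₀]
    have hNM₀ : Uᴴ * M₀ * U = diagonal (fun i => if 0 ≤ lam i then (1 : ℂ) else 0) := by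
      rw [hM₀def]
      have : Uᴴ * (U * diagonal (fun i => if 0 ≤ lam i then (1 : ℂ) else 0) * Uᴴ) * U
          = (Uᴴ * U) * diagonal (fun i => if 0 ≤ lam i then (1 : ℂ) else 0) * (Uᴴ * U) := by
        noncomm_ring
      rw [this, hUU, one_mul, Matrix.mul_one]
    rw [hNM₀]
    have : ∀ i, ((diagonal (fun i => if 0 ≤ lam i then (1 : ℂ) else 0)) i i).re * lam i
        = (lam i + |lam i|) / 2 := by
      intro i
      rw [diagonal_apply_eq]
      rcases le_or_gt 0 (lam i) with h | h
      · rw [if_pos h, abs_of_nonneg h, Complex.one_re]; ring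
      · rw [if_neg (not_le.mpr h), abs_of_neg h, Complex.zero_re]; ring
    rw [Finset.sum_congr rfl fun i _ => this i, ← Finset.sum_div,
      Finset.sum_add_distrib, sumlam]
    ring
  -- success probability formula
  have psucc_eq : ∀ M : Matrix d d ℂ,
      ((M * ρ).trace).re / 2 + (((1 - M) * σ).trace).re / 2
        = 1 / 2 + ((M * (ρ - σ)).trace).re / 2 := by
    intro M
    have h1 : ((1 : Matrix d d ℂ) - M) * σ = σ - M * σ := by
      rw [Matrix.sub_mul, Matrix.one_mul]
    have h2 : M * (ρ - σ) = M * ρ - M * σ := by rw [Matrix.mul_sub]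
    rw [h1, h2, trace_sub, trace_sub, hσ1]
    simp only [Complex.sub_re, Complex.one_re]
    ring
  constructor
  · constructor
    · exact ⟨M₀, hM₀psd, h1M₀psd, by rw [psucc_eq, hM₀val, htn]; ring⟩
    · rintro p ⟨M, hM, h1M, rfl⟩
      rw [psucc_eq, htn]
      have := bound M hM h1M
      linarith
  · intro M hM h1M
    rw [psucc_eq, htn]
    have := bound M hM h1M
    linarith
end

section
/- Classical analogue for shallow Markov chains: let q be a probability distribution on A₁ × ⋯ × Aₙ obtained by applying k layers of two-coordinate stochastic maps (each coordinate used at most once per layer) to a point mass. For a linear functional L(q) = ∑ᵢ p_{sᵢ} E_q[f_{sᵢ}] with |f_{sᵢ}| ≤ 1, supports of size ≤ ℓ, and each support intersecting at most D others, the empirical estimator from a single sample x ∼ q, Y = ∑ᵢ p_{sᵢ} f_{sᵢ}(x), satisfies E Y = L(q) and Var(Y) ≤ C(k,ℓ,D) ∑ᵢ p_{sᵢ}². -/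
/-- A real matrix on the product state space acts non-trivially only on coordinates in `S`. -/
def CSupportedOn {n : ℕ} {A : Fin n → Type*} [∀ i, DecidableEq (A i)]
    (M : Matrix (∀ i, A i) (∀ i, A i) ℝ) (S : Finset (Fin n)) : Prop :=
  ∃ f : (∀ i : S, A i.1) → (∀ i : S, A i.1) → ℝ,
    ∀ x y, M x y = f (fun i => x i.1) (fun i => y i.1) *
      (if ∀ i, i ∉ S → x i = y i then 1 else 0)

/-- A (column-)stochastic matrix: nonnegative entries, each column summing to `1`. -/
def IsStochastic {n : ℕ} {A : Fin n → Type*} [∀ i, Fintype (A i)]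
    (M : Matrix (∀ i, A i) (∀ i, A i) ℝ) : Prop :=
  (∀ x y, 0 ≤ M x y) ∧ ∀ y, ∑ x, M x y = 1

/-- A single layer of local Markov chains: a product of stochastic maps, each acting on at
most two coordinates, with pairwise disjoint supports (each coordinate used at most once). -/
def CIsLayer {n : ℕ} {A : Fin n → Type*} [∀ i, Fintype (A i)] [∀ i, DecidableEq (A i)]
    (M : Matrix (∀ i, A i) (∀ i, A i) ℝ)
    (gates : List (Matrix (∀ i, A i) (∀ i, A i) ℝ × Finset (Fin n))) : Prop :=
  M = (gates.map Prod.fst).prod ∧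
  (∀ g ∈ gates, IsStochastic g.1 ∧ CSupportedOn g.1 g.2 ∧ g.2.card ≤ 2) ∧
  gates.Pairwise (fun g h => Disjoint g.2 h.2)

open scoped Classical

-- Auxiliary development

section Cone
variable {n : ℕ}

/-- union of a list of finsets -/
def lU (l : List (Finset (Fin n))) : Finset (Fin n) := l.foldr (· ∪ ·) ∅

lemma mem_lU {l : List (Finset (Fin n))} {x : Fin n} :
    x ∈ lU l ↔ ∃ g ∈ l, x ∈ g := by
  induction l with
  | nil => simp [lU]
  | cons g t ih =>
    simp only [lU, List.foldr, Finset.mem_union, List.mem_cons] at ih ⊢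
    rw [ih]; aesop

/-- one-coordinate cone through one layer's gate supports -/
def coneOne (gs : List (Finset (Fin n))) (a : Fin n) : Finset (Fin n) :=
  insert a (lU (gs.filter (fun g => a ∈ g)))

lemma mem_coneOne {gs : List (Finset (Fin n))} {a x : Fin n} :
    x ∈ coneOne gs a ↔ x = a ∨ ∃ g ∈ gs, a ∈ g ∧ x ∈ g := by
  simp [coneOne, mem_lU, List.mem_filter]
  constructor
  · rintro (h | ⟨g, ⟨hg, ha⟩, hx⟩)
    · exact Or.inl h
    · exact Or.inr ⟨g, hg, by simpa using ha, hx⟩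
  · rintro (h | ⟨g, hg, ha, hx⟩)
    · exact Or.inl h
    · exact Or.inr ⟨g, ⟨hg, by simpa using ha⟩, hx⟩

lemma coneOne_symm {gs : List (Finset (Fin n))} {a x : Fin n} :
    x ∈ coneOne gs a ↔ a ∈ coneOne gs x := by
  rw [mem_coneOne, mem_coneOne]
  constructor <;> rintro (h | ⟨g, hg, h1, h2⟩)
  · exact Or.inl h.symm
  · exact Or.inr ⟨g, hg, h2, h1⟩
  · exact Or.inl h.symm
  · exact Or.inr ⟨g, hg, h2, h1⟩

lemma unique_gate {gs : List (Finset (Fin n))} (hp : gs.Pairwise Disjoint)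
    {g g' : Finset (Fin n)} {a : Fin n} (hg : g ∈ gs) (hg' : g' ∈ gs)
    (ha : a ∈ g) (ha' : a ∈ g') : g = g' := by
  induction gs with
  | nil => simp at hg
  | cons b t ih =>
    rcases List.pairwise_cons.1 hp with ⟨hd, ht⟩
    rcases List.mem_cons.1 hg with rfl | hg2 <;> rcases List.mem_cons.1 hg' with rfl | hg2'
    · rfl
    · exact absurd ha' (Finset.disjoint_left.1 (hd _ hg2') ha)
    · exact absurd ha (Finset.disjoint_left.1 (hd _ hg2) ha')
    · exact ih ht hg2 hg2'

lemma card_coneOne {gs : List (Finset (Fin n))} (hp : gs.Pairwise Disjoint)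
    (hc : ∀ g ∈ gs, g.card ≤ 2) (a : Fin n) : (coneOne gs a).card ≤ 2 := by
  by_cases h : ∃ g ∈ gs, a ∈ g
  · obtain ⟨g, hg, ha⟩ := h
    have hsub : coneOne gs a ⊆ g := by
      intro x hx
      rcases mem_coneOne.1 hx with rfl | ⟨g', hg', h1, h2⟩
      · exact ha
      · exact (unique_gate hp hg' hg h1 ha) ▸ h2
    exact le_trans (Finset.card_le_card hsub) (hc g hg)
  · have : coneOne gs a = {a} := by
      ext x
      rw [mem_coneOne]
      simp only [Finset.mem_singleton]
      constructor
      · rintro (rfl | ⟨g, hg, h1, h2⟩)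
        · rfl
        · exact absurd ⟨g, hg, h1⟩ h
      · rintro rfl; exact Or.inl rfl
    rw [this]; simp

/-- cone of a set through one layer -/
def cone (gs : List (Finset (Fin n))) (S : Finset (Fin n)) : Finset (Fin n) :=
  S.biUnion (coneOne gs)

lemma mem_cone {gs : List (Finset (Fin n))} {S : Finset (Fin n)} {x : Fin n} :
    x ∈ cone gs S ↔ ∃ a ∈ S, x ∈ coneOne gs a := Finset.mem_biUnion

lemma subset_cone {gs : List (Finset (Fin n))} {S : Finset (Fin n)} : S ⊆ cone gs S :=
  fun a ha => mem_cone.2 ⟨a, ha, mem_coneOne.2 (Or.inl rfl)⟩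

lemma card_cone {gs : List (Finset (Fin n))} (hp : gs.Pairwise Disjoint)
    (hc : ∀ g ∈ gs, g.card ≤ 2) (S : Finset (Fin n)) :
    (cone gs S).card ≤ S.card * 2 :=
  Finset.card_biUnion_le_card_mul _ _ _ (fun a _ => card_coneOne hp hc a)

/-- cone through a chain of layers (applied left-to-right) -/
def coneChain (Ls : List (List (Finset (Fin n)))) (S : Finset (Fin n)) : Finset (Fin n) :=
  Ls.foldl (fun S L => cone L S) S

/-- backwards chain for a single coordinate -/
def bChain (Ls : List (List (Finset (Fin n)))) (x : Fin n) : Finset (Fin n) :=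
  Ls.foldr (fun L T => cone L T) {x}

lemma mem_coneChain {Ls : List (List (Finset (Fin n)))} {S : Finset (Fin n)} {x : Fin n} :
    x ∈ coneChain Ls S ↔ ∃ a ∈ bChain Ls x, a ∈ S := by
  induction Ls generalizing S with
  | nil => simp [coneChain, bChain]
  | cons L t ih =>
    show x ∈ coneChain t (cone L S) ↔ _
    rw [ih]
    show _ ↔ ∃ a ∈ cone L (bChain t x), a ∈ S
    constructor
    · rintro ⟨a, ha, hc⟩
      rcases mem_cone.1 hc with ⟨b, hb, hab⟩
      exact ⟨b, mem_cone.2 ⟨a, ha, coneOne_symm.1 hab⟩, hb⟩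
    · rintro ⟨b, hb, hbS⟩
      rcases mem_cone.1 hb with ⟨a, ha, hab⟩
      exact ⟨a, ha, mem_cone.2 ⟨b, hbS, coneOne_symm.1 hab⟩⟩

lemma subset_coneChain {Ls : List (List (Finset (Fin n)))} {S : Finset (Fin n)} :
    S ⊆ coneChain Ls S := by
  induction Ls generalizing S with
  | nil => exact fun _ h => h
  | cons L t ih => exact fun a ha => ih (subset_cone ha)

lemma coneChain_mono {Ls : List (List (Finset (Fin n)))} {S T : Finset (Fin n)}
    (h : S ⊆ T) : coneChain Ls S ⊆ coneChain Ls T := by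
  intro x hx
  rw [mem_coneChain] at hx ⊢
  obtain ⟨a, ha, haS⟩ := hx
  exact ⟨a, ha, h haS⟩

lemma card_coneChain {Ls : List (List (Finset (Fin n)))}
    (hp : ∀ L ∈ Ls, L.Pairwise Disjoint ∧ ∀ g ∈ L, g.card ≤ 2)
    (S : Finset (Fin n)) : (coneChain Ls S).card ≤ S.card * 2 ^ Ls.length := by
  induction Ls generalizing S with
  | nil => simpa [coneChain] using le_refl S.card
  | cons L t ih =>
    have h1 := (hp L (List.mem_cons_self))
    calc (coneChain t (cone L S)).card ≤ (cone L S).card * 2 ^ t.length :=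
          ih (fun L' hL' => hp L' (List.mem_cons_of_mem _ hL')) _
      _ ≤ S.card * 2 * 2 ^ t.length :=
          Nat.mul_le_mul_right _ (card_cone h1.1 h1.2 S)
      _ = S.card * 2 ^ (L :: t).length := by
          rw [List.length_cons, pow_succ]; ring

lemma card_bChain {Ls : List (List (Finset (Fin n)))}
    (hp : ∀ L ∈ Ls, L.Pairwise Disjoint ∧ ∀ g ∈ L, g.card ≤ 2)
    (x : Fin n) : (bChain Ls x).card ≤ 2 ^ Ls.length := by
  induction Ls with
  | nil => simp [bChain]
  | cons L t ih =>
    have h1 := (hp L (List.mem_cons_self))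
    calc (cone L (bChain t x)).card ≤ (bChain t x).card * 2 :=
          card_cone h1.1 h1.2 _
      _ ≤ 2 ^ t.length * 2 := Nat.mul_le_mul_right _ (ih (fun L' hL' => hp L' (List.mem_cons_of_mem _ hL')))
      _ = 2 ^ (L :: t).length := by rw [List.length_cons, pow_succ]

end Cone

section Op
variable {n : ℕ} {A : Fin n → Type} [∀ i, Fintype (A i)] [∀ i, DecidableEq (A i)]

open scoped Classical

/-- function determined by coordinates in `S` -/
def SuppOn (F : (∀ i, A i) → ℝ) (S : Finset (Fin n)) : Prop :=
  ∀ x y, (∀ i ∈ S, x i = y i) → F x = F y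

lemma SuppOn.mono {F : (∀ i, A i) → ℝ} {S T : Finset (Fin n)} (h : SuppOn F S)
    (hST : S ⊆ T) : SuppOn F T :=
  fun x y hxy => h x y (fun i hi => hxy i (hST hi))

/-- transpose action of a matrix on functions -/
def Tr (M : Matrix (∀ i, A i) (∀ i, A i) ℝ) (F : (∀ i, A i) → ℝ) : (∀ i, A i) → ℝ :=
  fun y => ∑ x, M x y * F x

lemma Tr_one (F : (∀ i, A i) → ℝ) : Tr 1 F = F := by
  funext y
  simp [Tr, Matrix.one_apply]

lemma Tr_mul (M N : Matrix (∀ i, A i) (∀ i, A i) ℝ) (F : (∀ i, A i) → ℝ) :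
    Tr (M * N) F = Tr N (Tr M F) := by
  funext y
  simp only [Tr, Matrix.mul_apply, Finset.sum_mul, Finset.mul_sum]
  rw [Finset.sum_comm]
  apply Finset.sum_congr rfl; intro z _
  apply Finset.sum_congr rfl; intro x _
  ring

lemma expectation_mulVec (M : Matrix (∀ i, A i) (∀ i, A i) ℝ) (v F : (∀ i, A i) → ℝ) :
    ∑ x, (M.mulVec v) x * F x = ∑ y, v y * Tr M F y := by
  simp only [Matrix.mulVec, Tr, dotProduct, Finset.sum_mul, Finset.mul_sum]
  rw [Finset.sum_comm]
  apply Finset.sum_congr rfl; intro z _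
  apply Finset.sum_congr rfl; intro x _
  ring

/-- patch `w` onto `y` over `G` -/
noncomputable def patch (G : Finset (Fin n)) (w : ∀ i : G, A i.1) (y : ∀ i, A i) :
    ∀ i, A i := fun i => if h : i ∈ G then w ⟨i, h⟩ else y i

lemma gate_expand {M : Matrix (∀ i, A i) (∀ i, A i) ℝ} {G : Finset (Fin n)}
    {floc : (∀ i : G, A i.1) → (∀ i : G, A i.1) → ℝ}
    (hM : ∀ x y, M x y = floc (fun i => x i.1) (fun i => y i.1) *
      (if ∀ i, i ∉ G → x i = y i then 1 else 0))
    (F : (∀ i, A i) → ℝ) (y : ∀ i, A i) :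
    Tr M F y = ∑ w : ∀ i : G, A i.1, floc w (fun i => y i.1) * F (patch G w y) := by
  classical
  rw [Tr]
  rw [← Finset.sum_filter_add_sum_filter_not Finset.univ (fun x => ∀ i, i ∉ G → x i = y i)]
  have h2 : ∀ x ∈ Finset.univ.filter (fun x => ¬ ∀ i, i ∉ G → x i = y i),
      M x y * F x = 0 := by
    intro x hx
    rw [Finset.mem_filter] at hx
    rw [hM]
    simp [hx.2]
  rw [Finset.sum_eq_zero h2, add_zero]
  apply Finset.sum_nbij' (i := fun x => (fun i : G => x i.1))
    (j := fun w => patch G w y)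
  · intro x hx
    exact Finset.mem_univ _
  · intro w hw
    rw [Finset.mem_filter]
    refine ⟨Finset.mem_univ _, fun i hi => ?_⟩
    simp [patch, hi]
  · intro x hx
    rw [Finset.mem_filter] at hx
    funext i
    by_cases h : i ∈ G
    · simp [patch, h]
    · simp [patch, h, hx.2 i h]
  · intro w hw
    funext i
    simp [patch, i.2]
  · intro x hx
    rw [Finset.mem_filter] at hx
    rw [hM]
    have hxy : (∀ i, i ∉ G → x i = y i) := hx.2
    rw [if_pos hxy, mul_one]
    congr 1
    congr 1
    funext i
    by_cases h : i ∈ G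
    · simp [patch, h]
    · simp [patch, h, hxy i h]

variable {M : Matrix (∀ i, A i) (∀ i, A i) ℝ} {G : Finset (Fin n)}

lemma gate_tr_one (hs : IsStochastic M) (hsup : CSupportedOn M G) :
    Tr M (fun _ => (1:ℝ)) = fun _ => 1 := by
  funext y
  simp [Tr, hs.2 y]

/-- column sums of the local kernel are 1 -/
lemma gate_loc_sum (hs : IsStochastic M)
    {floc : (∀ i : G, A i.1) → (∀ i : G, A i.1) → ℝ}
    (hM : ∀ x y, M x y = floc (fun i : G => x i.1) (fun i => y i.1) *
      (if ∀ i, i ∉ G → x i = y i then 1 else 0)) (y : ∀ i, A i) :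
    ∑ w : ∀ i : G, A i.1, floc w (fun i => y i.1) = 1 := by
  have := gate_expand hM (fun _ => (1:ℝ)) y
  simp only [mul_one] at this
  rw [← this, Tr, ]
  simp [hs.2 y]

lemma gate_suppOn (hsup : CSupportedOn M G) {F : (∀ i, A i) → ℝ} {S : Finset (Fin n)}
    (hF : SuppOn F S) : SuppOn (Tr M F) (S ∪ G) := by
  obtain ⟨floc, hM⟩ := hsup
  intro y y' hyy
  rw [gate_expand hM, gate_expand hM]
  apply Finset.sum_congr rfl
  intro w _
  congr 1
  · congr 1
    funext i
    exact hyy i.1 (Finset.mem_union_right _ i.2)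
  · apply hF
    intro i hi
    by_cases h : i ∈ G
    · simp [patch, h]
    · simp only [patch, h, dif_neg, not_false_iff]
      exact hyy i (Finset.mem_union_left _ hi)

/-- pull out a factor not touching the gate -/
lemma gate_mul (hsup : CSupportedOn M G) {F H : (∀ i, A i) → ℝ} {U : Finset (Fin n)}
    (hH : SuppOn H U) (hdisj : Disjoint U G) :
    Tr M (F * H) = Tr M F * H := by
  obtain ⟨floc, hM⟩ := hsup
  funext y
  rw [Pi.mul_apply, gate_expand hM, gate_expand hM]
  rw [Finset.sum_mul]
  apply Finset.sum_congr rfl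
  intro w _
  have : H (patch G w y) = H y := by
    apply hH
    intro i hi
    have : i ∉ G := Finset.disjoint_left.1 hdisj hi
    simp [patch, this]
  rw [Pi.mul_apply, this]
  ring

lemma gate_id (hs : IsStochastic M) (hsup : CSupportedOn M G)
    {F : (∀ i, A i) → ℝ} {S : Finset (Fin n)} (hF : SuppOn F S)
    (hdisj : Disjoint S G) : Tr M F = F := by
  have h1 : ((fun _ => (1:ℝ)) * F) = F := by funext x; simp
  have := gate_mul hsup hF hdisj (F := fun _ => (1:ℝ))
  rw [h1, gate_tr_one hs hsup] at this
  rw [this]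
  funext x; simp

lemma stochastic_one : IsStochastic (1 : Matrix (∀ i, A i) (∀ i, A i) ℝ) := by
  constructor
  · intro x y
    rw [Matrix.one_apply]
    split <;> norm_num
  · intro y
    simp [Matrix.one_apply]

lemma stochastic_mul {M N : Matrix (∀ i, A i) (∀ i, A i) ℝ}
    (hM : IsStochastic M) (hN : IsStochastic N) : IsStochastic (M * N) := by
  constructor
  · intro x y
    rw [Matrix.mul_apply]
    exact Finset.sum_nonneg fun z _ => mul_nonneg (hM.1 x z) (hN.1 z y)
  · intro y
    simp only [Matrix.mul_apply]
    rw [Finset.sum_comm]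
    simp [← Finset.sum_mul, hM.2, hN.2 y]

lemma stochastic_list_prod {l : List (Matrix (∀ i, A i) (∀ i, A i) ℝ)}
    (h : ∀ M ∈ l, IsStochastic M) : IsStochastic l.prod := by
  induction l with
  | nil => exact stochastic_one
  | cons a t ih =>
    rw [List.prod_cons]
    exact stochastic_mul (h a (List.mem_cons_self))
      (ih fun M hM => h M (List.mem_cons_of_mem _ hM))

end Op

section Chain
variable {n : ℕ} {A : Fin n → Type} [∀ i, Fintype (A i)] [∀ i, DecidableEq (A i)]

open scoped Classical

lemma SuppOn.mul {F H : (∀ i, A i) → ℝ} {S U : Finset (Fin n)}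
    (hF : SuppOn F S) (hH : SuppOn H U) : SuppOn (F * H) (S ∪ U) := by
  intro x y hxy
  simp only [Pi.mul_apply]
  rw [hF x y (fun i hi => hxy i (Finset.mem_union_left _ hi)),
    hH x y (fun i hi => hxy i (Finset.mem_union_right _ hi))]

lemma coneOne_cons_subset {g : Finset (Fin n)} {gs : List (Finset (Fin n))} {a : Fin n} :
    coneOne gs a ⊆ coneOne (g :: gs) a := by
  intro x hx
  rcases mem_coneOne.1 hx with rfl | ⟨g', hg', h1, h2⟩
  · exact mem_coneOne.2 (Or.inl rfl)
  · exact mem_coneOne.2 (Or.inr ⟨g', List.mem_cons_of_mem _ hg', h1, h2⟩)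

lemma cone_cons_subset {g : Finset (Fin n)} {gs : List (Finset (Fin n))}
    {S : Finset (Fin n)} : cone gs S ⊆ cone (g :: gs) S := by
  intro x hx
  rcases mem_cone.1 hx with ⟨a, ha, hxa⟩
  exact mem_cone.2 ⟨a, ha, coneOne_cons_subset hxa⟩

lemma cone_union_gate_subset {g : Finset (Fin n)} {gs : List (Finset (Fin n))}
    {S : Finset (Fin n)} (hp : (g :: gs).Pairwise Disjoint)
    (hmeet : ¬ Disjoint g S) : cone gs (S ∪ g) ⊆ cone (g :: gs) S := by
  intro x hx
  rcases mem_cone.1 hx with ⟨a, ha, hxa⟩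
  rcases Finset.mem_union.1 ha with haS | hag
  · exact mem_cone.2 ⟨a, haS, coneOne_cons_subset hxa⟩
  · rcases mem_coneOne.1 hxa with rfl | ⟨g', hg', h1, h2⟩
    · obtain ⟨b, hbg, hbS⟩ := Finset.not_disjoint_iff.1 hmeet
      exact mem_cone.2 ⟨b, hbS,
        mem_coneOne.2 (Or.inr ⟨g, List.mem_cons_self, hbg, hag⟩)⟩
    · exact absurd h1
        (Finset.disjoint_left.1 ((List.pairwise_cons.1 hp).1 g' hg') hag)

/-- factorization through one layer -/
lemma layer_factor (gs : List (Matrix (∀ i, A i) (∀ i, A i) ℝ × Finset (Fin n)))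
    (hg : ∀ g ∈ gs, IsStochastic g.1 ∧ CSupportedOn g.1 g.2)
    (hp : (gs.map Prod.snd).Pairwise Disjoint) :
    ∀ (S U : Finset (Fin n)) (F H : (∀ i, A i) → ℝ), SuppOn F S → SuppOn H U →
    Disjoint S U → (∀ g ∈ gs, Disjoint g.2 S ∨ Disjoint g.2 U) →
    Tr (gs.map Prod.fst).prod (F * H) =
      Tr (gs.map Prod.fst).prod F * Tr (gs.map Prod.fst).prod H ∧
    SuppOn (Tr (gs.map Prod.fst).prod F) (cone (gs.map Prod.snd) S) ∧
    SuppOn (Tr (gs.map Prod.fst).prod H) (cone (gs.map Prod.snd) U) := by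
  induction gs with
  | nil =>
    intro S U F H hF hH hSU hcond
    simp only [List.map_nil, List.prod_nil, Tr_one]
    refine ⟨by trivial, ?_, ?_⟩
    · exact hF.mono subset_cone
    · exact hH.mono subset_cone
  | cons g t ih =>
    intro S U F H hF hH hSU hcond
    have hgs := hg g (List.mem_cons_self)
    have hgt : ∀ g' ∈ t, IsStochastic g'.1 ∧ CSupportedOn g'.1 g'.2 :=
      fun g' hg' => hg g' (List.mem_cons_of_mem _ hg')
    have hpt : (t.map Prod.snd).Pairwise Disjoint := by
      rw [List.map_cons] at hp; exact (List.pairwise_cons.1 hp).2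
    have hdisj_head : ∀ g' ∈ t, Disjoint g.2 g'.2 := by
      intro g' hg'
      rw [List.map_cons] at hp
      exact (List.pairwise_cons.1 hp).1 g'.2 (List.mem_map_of_mem hg')
    simp only [List.map_cons, List.prod_cons, Tr_mul]
    by_cases hS : Disjoint g.2 S
    · by_cases hU : Disjoint g.2 U
      · -- gate acts trivially on both
        have e1 : Tr g.1 F = F := gate_id hgs.1 hgs.2 hF hS.symm
        have e2 : Tr g.1 H = H := gate_id hgs.1 hgs.2 hH hU.symm
        have e3 : Tr g.1 (F * H) = F * H :=
          gate_id hgs.1 hgs.2 (hF.mul hH) (Finset.disjoint_union_left.2 ⟨hS.symm, hU.symm⟩)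
        rw [e1, e2, e3]
        obtain ⟨c1, c2, c3⟩ := ih hgt hpt S U F H hF hH hSU
          (fun g' hg' => hcond g' (List.mem_cons_of_mem _ hg'))
        exact ⟨c1, c2.mono cone_cons_subset, c3.mono cone_cons_subset⟩
      · -- gate touches U only
        have e1 : Tr g.1 F = F := gate_id hgs.1 hgs.2 hF hS.symm
        have e2 : SuppOn (Tr g.1 H) (U ∪ g.2) := gate_suppOn hgs.2 hH
        have e3 : Tr g.1 (F * H) = F * Tr g.1 H := by
          have : F * H = H * F := mul_comm _ _
          rw [this, gate_mul hgs.2 hF hS.symm, mul_comm]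
        rw [e1, e3]
        obtain ⟨c1, c2, c3⟩ := ih hgt hpt S (U ∪ g.2) F (Tr g.1 H) hF e2
          (Finset.disjoint_union_right.2 ⟨hSU, hS.symm⟩)
          (fun g' hg' => by
            rcases hcond g' (List.mem_cons_of_mem _ hg') with h | h
            · exact Or.inl h
            · exact Or.inr (Finset.disjoint_union_right.2 ⟨h, (hdisj_head g' hg').symm⟩))
        refine ⟨c1, c2.mono cone_cons_subset, c3.mono ?_⟩
        exact cone_union_gate_subset (by rw [List.map_cons] at hp; exact hp) hU
    · -- gate touches S only
      have hU : Disjoint g.2 U := (hcond g (List.mem_cons_self)).resolve_left hS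
      have e1 : Tr g.1 H = H := gate_id hgs.1 hgs.2 hH hU.symm
      have e2 : SuppOn (Tr g.1 F) (S ∪ g.2) := gate_suppOn hgs.2 hF
      have e3 : Tr g.1 (F * H) = Tr g.1 F * H := gate_mul hgs.2 hH hU.symm
      rw [e1, e3]
      obtain ⟨c1, c2, c3⟩ := ih hgt hpt (S ∪ g.2) U (Tr g.1 F) H e2 hH
        (Finset.disjoint_union_left.2 ⟨hSU, hU⟩)
        (fun g' hg' => by
          rcases hcond g' (List.mem_cons_of_mem _ hg') with h | h
          · exact Or.inl (Finset.disjoint_union_right.2 ⟨h, (hdisj_head g' hg').symm⟩)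
          · exact Or.inr h)
      refine ⟨c1, c2.mono ?_, c3.mono cone_cons_subset⟩
      exact cone_union_gate_subset (by rw [List.map_cons] at hp; exact hp) hS

/-- factorization through a chain of layers -/
lemma chain_factor (ls : List (List (Matrix (∀ i, A i) (∀ i, A i) ℝ × Finset (Fin n))))
    (hl : ∀ L ∈ ls, (∀ g ∈ L, IsStochastic g.1 ∧ CSupportedOn g.1 g.2) ∧
      (L.map Prod.snd).Pairwise Disjoint) :
    ∀ (S U : Finset (Fin n)) (F H : (∀ i, A i) → ℝ), SuppOn F S → SuppOn H U →
    Disjoint (coneChain (ls.map (fun L => L.map Prod.snd)) S)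
      (coneChain (ls.map (fun L => L.map Prod.snd)) U) →
    Tr (ls.map (fun L => (L.map Prod.fst).prod)).prod (F * H) =
      Tr (ls.map (fun L => (L.map Prod.fst).prod)).prod F *
      Tr (ls.map (fun L => (L.map Prod.fst).prod)).prod H ∧
    SuppOn (Tr (ls.map (fun L => (L.map Prod.fst).prod)).prod F)
      (coneChain (ls.map (fun L => L.map Prod.snd)) S) ∧
    SuppOn (Tr (ls.map (fun L => (L.map Prod.fst).prod)).prod H)
      (coneChain (ls.map (fun L => L.map Prod.snd)) U) := by
  induction ls with
  | nil =>
    intro S U F H hF hH _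
    simp only [List.map_nil, List.prod_nil, Tr_one]
    exact ⟨by trivial, hF, hH⟩
  | cons L t ih =>
    intro S U F H hF hH hdisj
    have hL := hl L (List.mem_cons_self)
    have hlt : ∀ L' ∈ t, (∀ g ∈ L', IsStochastic g.1 ∧ CSupportedOn g.1 g.2) ∧
        (L'.map Prod.snd).Pairwise Disjoint :=
      fun L' hL' => hl L' (List.mem_cons_of_mem _ hL')
    -- chain disjointness at the head layer
    have hchainS : coneChain ((L :: t).map (fun L => L.map Prod.snd)) S =
        coneChain (t.map (fun L => L.map Prod.snd)) (cone (L.map Prod.snd) S) := rfl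
    have hsubS : cone (L.map Prod.snd) S ⊆
        coneChain ((L :: t).map (fun L => L.map Prod.snd)) S := by
      rw [hchainS]; exact subset_coneChain
    have hsubU : cone (L.map Prod.snd) U ⊆
        coneChain ((L :: t).map (fun L => L.map Prod.snd)) U := subset_coneChain
    have hSU : Disjoint S U :=
      Finset.disjoint_of_subset_left (subset_cone.trans hsubS)
        (Finset.disjoint_of_subset_right (subset_cone.trans hsubU) hdisj)
    have hcond : ∀ g ∈ L, Disjoint g.2 S ∨ Disjoint g.2 U := by
      intro g hgL
      by_contra hcon
      push_neg at hcon
      obtain ⟨a, hag, haS⟩ := Finset.not_disjoint_iff.1 hcon.1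
      obtain ⟨b, hbg, hbU⟩ := Finset.not_disjoint_iff.1 hcon.2
      have h1 : b ∈ cone (L.map Prod.snd) S :=
        mem_cone.2 ⟨a, haS, mem_coneOne.2
          (Or.inr ⟨g.2, List.mem_map_of_mem hgL, hag, hbg⟩)⟩
      have h2 : b ∈ cone (L.map Prod.snd) U := subset_cone hbU
      exact Finset.disjoint_left.1 hdisj (hsubS h1) (hsubU h2)
    obtain ⟨e1, e2, e3⟩ := layer_factor L hL.1 hL.2 S U F H hF hH hSU hcond
    simp only [List.map_cons, List.prod_cons, Tr_mul]
    exact ih hlt (cone (L.map Prod.snd) S) (cone (L.map Prod.snd) U) _ _ e2 e3 hdisj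
      |>.imp (fun c1 => by rw [e1, c1]) id

end Chain

section Var
variable {X : Type} [Fintype X]

lemma var_eq (q : X → ℝ) (hq1 : ∑ x, q x = 1) {m : ℕ} (p : Fin m → ℝ)
    (f : Fin m → X → ℝ) :
    ∑ x, q x * ((∑ i, p i * f i x) - (∑ i, p i * ∑ x, q x * f i x)) ^ 2
    = ∑ i, ∑ j, p i * p j *
        ((∑ x, q x * (f i x * f j x)) - (∑ x, q x * f i x) * (∑ x, q x * f j x)) := by
  set L : ℝ := ∑ i, p i * ∑ x, q x * f i x with hL
  have hEY : ∑ x, q x * ∑ i, p i * f i x = L := by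
    rw [hL]
    simp only [Finset.mul_sum]
    rw [Finset.sum_comm]
    refine Finset.sum_congr rfl fun i _ => ?_
    refine Finset.sum_congr rfl fun x _ => by ring
  have hEY2 : ∑ x, q x * (∑ i, p i * f i x) ^ 2
      = ∑ i, ∑ j, p i * p j * ∑ x, q x * (f i x * f j x) := by
    calc ∑ x, q x * (∑ i, p i * f i x) ^ 2
        = ∑ x, ∑ i, ∑ j, p i * p j * (q x * (f i x * f j x)) := by
          refine Finset.sum_congr rfl fun x _ => ?_
          rw [pow_two, Finset.sum_mul_sum, Finset.mul_sum]
          refine Finset.sum_congr rfl fun i _ => ?_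
          rw [Finset.mul_sum]
          exact Finset.sum_congr rfl fun j _ => by ring
      _ = ∑ i, ∑ x, ∑ j, p i * p j * (q x * (f i x * f j x)) := Finset.sum_comm
      _ = ∑ i, ∑ j, ∑ x, p i * p j * (q x * (f i x * f j x)) :=
          Finset.sum_congr rfl fun i _ => Finset.sum_comm
      _ = ∑ i, ∑ j, p i * p j * ∑ x, q x * (f i x * f j x) := by
          refine Finset.sum_congr rfl fun i _ => Finset.sum_congr rfl fun j _ => ?_
          rw [Finset.mul_sum]
  have hL2 : L ^ 2 = ∑ i, ∑ j, p i * p j * ((∑ x, q x * f i x) * (∑ x, q x * f j x)) := by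
    rw [hL, pow_two, Finset.sum_mul_sum]
    exact Finset.sum_congr rfl fun i _ => Finset.sum_congr rfl fun j _ => by ring
  have hexp : ∀ x, q x * ((∑ i, p i * f i x) - L) ^ 2
      = q x * (∑ i, p i * f i x) ^ 2 - 2 * L * (q x * ∑ i, p i * f i x) + L ^ 2 * q x := by
    intro x; ring
  rw [Finset.sum_congr rfl fun x _ => hexp x]
  rw [Finset.sum_add_distrib, Finset.sum_sub_distrib, ← Finset.mul_sum, ← Finset.mul_sum]
  rw [hEY, hq1, hEY2, mul_one]
  have final : ∀ Aq : ℝ, Aq - 2 * L * L + L ^ 2 = Aq - L ^ 2 := fun Aq => by ring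
  rw [final, hL2, ← Finset.sum_sub_distrib]
  refine Finset.sum_congr rfl fun i _ => ?_
  rw [← Finset.sum_sub_distrib]
  exact Finset.sum_congr rfl fun j _ => by ring

lemma var_bound {m : ℕ} (p : Fin m → ℝ) (c : Fin m → Fin m → ℝ) (B : Fin m → Fin m → Prop)
    (hsym : ∀ i j, B i j ↔ B j i) (hzero : ∀ i j, ¬ B i j → c i j = 0)
    (hc : ∀ i j, |c i j| ≤ 2) (N : ℕ)
    (hN : ∀ i, (Finset.univ.filter (fun j => B i j)).card ≤ N) :
    ∑ i, ∑ j, p i * p j * c i j ≤ 2 * N * ∑ i, p i ^ 2 := by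
  have step1 : ∑ i, ∑ j, p i * p j * c i j
      ≤ ∑ i, ∑ j, ((if B i j then p i ^ 2 else 0) + (if B i j then p j ^ 2 else 0)) := by
    refine Finset.sum_le_sum fun i _ => Finset.sum_le_sum fun j _ => ?_
    by_cases h : B i j
    · simp only [h, if_true]
      calc p i * p j * c i j ≤ |p i * p j * c i j| := le_abs_self _
        _ = |p i| * |p j| * |c i j| := by rw [abs_mul, abs_mul]
        _ ≤ |p i| * |p j| * 2 :=
            mul_le_mul_of_nonneg_left (hc i j) (mul_nonneg (abs_nonneg _) (abs_nonneg _))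
        _ ≤ p i ^ 2 + p j ^ 2 := by
            have h2 := two_mul_le_add_sq |p i| |p j|
            rw [sq_abs, sq_abs] at h2
            linarith
    · simp [h, hzero i j h]
  refine le_trans step1 ?_
  have split : ∑ i, ∑ j, ((if B i j then p i ^ 2 else 0) + (if B i j then p j ^ 2 else 0))
      = (∑ i, ∑ j, (if B i j then p i ^ 2 else 0))
        + ∑ i, ∑ j, (if B i j then p j ^ 2 else 0) := by
    rw [← Finset.sum_add_distrib]
    exact Finset.sum_congr rfl fun i _ => Finset.sum_add_distrib
  rw [split]
  have b1 : ∑ i, ∑ j, (if B i j then p i ^ 2 else 0) ≤ (N : ℝ) * ∑ i, p i ^ 2 := by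
    rw [Finset.mul_sum]
    refine Finset.sum_le_sum fun i _ => ?_
    rw [← Finset.sum_filter, Finset.sum_const, nsmul_eq_mul]
    exact mul_le_mul_of_nonneg_right (Nat.cast_le.2 (hN i)) (sq_nonneg _)
  have b2 : ∑ i, ∑ j, (if B i j then p j ^ 2 else 0) ≤ (N : ℝ) * ∑ i, p i ^ 2 := by
    rw [Finset.sum_comm, Finset.mul_sum]
    refine Finset.sum_le_sum fun j _ => ?_
    rw [← Finset.sum_filter, Finset.sum_const, nsmul_eq_mul]
    have : (Finset.univ.filter (fun i => B i j)) = (Finset.univ.filter (fun i => B j i)) :=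
      Finset.filter_congr fun i _ => by rw [hsym]
    rw [this]
    exact mul_le_mul_of_nonneg_right (Nat.cast_le.2 (hN j)) (sq_nonneg _)
  have : (2:ℝ) * N * ∑ i, p i ^ 2 = N * ∑ i, p i ^ 2 + N * ∑ i, p i ^ 2 := by ring
  rw [this]
  exact add_le_add b1 b2

end Var

set_option maxHeartbeats 1000000 in
/-- Classical analogue for shallow Markov chains: if `q` is obtained from a point mass by
`k` layers of two-coordinate stochastic maps, then for a linear functional
`L(q) = ∑ᵢ p_{sᵢ} E_q[f_{sᵢ}]` with `|f_{sᵢ}| ≤ 1`, supports of size at most `ℓ`, each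
intersecting at most `D` others, the single-sample empirical estimator
`Y(x) = ∑ᵢ p_{sᵢ} f_{sᵢ}(x)` is unbiased and has variance at most
`C(k,ℓ,D) ∑ᵢ p_{sᵢ}²` with `C` independent of `n`. -/
theorem stmt18 : ∃ C : ℕ → ℕ → ℕ → ℝ,
    ∀ (n : ℕ) (A : Fin n → Type) [∀ i, Fintype (A i)] [∀ i, DecidableEq (A i)],
    ∀ (k : ℕ) (M : Fin k → Matrix (∀ i, A i) (∀ i, A i) ℝ),
      (∀ j, ∃ gates, CIsLayer (M j) gates) →
    ∀ x0 : ∀ i, A i,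
    ∀ (m ℓ D : ℕ) (s : Fin m → Finset (Fin n)) (p : Fin m → ℝ)
      (f : Fin m → (∀ i, A i) → ℝ),
      (∀ i, (s i).card ≤ ℓ) →
      (∀ i, (Finset.univ.filter (fun j => ¬ Disjoint (s i) (s j))).card ≤ D) →
      (∀ i x y, (∀ j ∈ s i, x j = y j) → f i x = f i y) →
      (∀ i x, |f i x| ≤ 1) →
      let q : (∀ i, A i) → ℝ :=
        ((List.ofFn M).prod).mulVec (fun x => if x = x0 then 1 else 0)
      let L : ℝ := ∑ i, p i * ∑ x, q x * f i x
      let Y : (∀ i, A i) → ℝ := fun x => ∑ i, p i * f i x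
      (∑ x, q x * Y x = L) ∧
      (∑ x, q x * (Y x - L) ^ 2 ≤ C k ℓ D * ∑ i, (p i) ^ 2) := by
  classical
  refine ⟨fun k ℓ D => ((2 * (ℓ * 2 ^ k * (2 ^ k * D)) : ℕ) : ℝ), ?_⟩
  intro n A _ _ k M hM x0 m ℓ D s p f hcard hD hsupp hbound
  intro q L Y
  choose G hG using hM
  set ls : List (List (Matrix (∀ i, A i) (∀ i, A i) ℝ × Finset (Fin n))) :=
    List.ofFn G with hls
  set Ls : List (List (Finset (Fin n))) := ls.map (fun Lg => Lg.map Prod.snd) with hLs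
  have hgate : ∀ j, ∀ g ∈ G j, IsStochastic g.1 ∧ CSupportedOn g.1 g.2 ∧ g.2.card ≤ 2 :=
    fun j => (hG j).2.1
  have hpair : ∀ j, ((G j).map Prod.snd).Pairwise Disjoint := by
    intro j
    exact List.Pairwise.map _ (fun a b h => h) (hG j).2.2
  have hP : (List.ofFn M).prod = (ls.map (fun Lg => (Lg.map Prod.fst).prod)).prod := by
    have hMe : M = (fun Lg => (List.map Prod.fst Lg).prod) ∘ G := funext fun j => (hG j).1
    rw [hls, List.map_ofFn, hMe]
  have hl : ∀ Lg ∈ ls, (∀ g ∈ Lg, IsStochastic g.1 ∧ CSupportedOn g.1 g.2) ∧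
      (Lg.map Prod.snd).Pairwise Disjoint := by
    intro Lg hLg
    rw [hls, List.mem_ofFn] at hLg
    obtain ⟨j, rfl⟩ := hLg
    exact ⟨fun g hg => ⟨(hgate j g hg).1, (hgate j g hg).2.1⟩, hpair j⟩
  have hp2 : ∀ L' ∈ Ls, L'.Pairwise Disjoint ∧ ∀ g ∈ L', g.card ≤ 2 := by
    intro L' hL'
    rw [hLs, List.mem_map] at hL'
    obtain ⟨Lg, hLg, rfl⟩ := hL'
    rw [hls, List.mem_ofFn] at hLg
    obtain ⟨j, rfl⟩ := hLg
    refine ⟨hpair j, ?_⟩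
    intro g hg
    rw [List.mem_map] at hg
    obtain ⟨g0, hg0, rfl⟩ := hg
    exact (hgate j g0 hg0).2.2
  have hlen : Ls.length = k := by rw [hLs, hls]; simp
  have hPs : IsStochastic (List.ofFn M).prod := by
    apply stochastic_list_prod
    intro Mi hMi
    rw [List.mem_ofFn] at hMi
    obtain ⟨j, rfl⟩ := hMi
    rw [(hG j).1]
    apply stochastic_list_prod
    intro N hN
    rw [List.mem_map] at hN
    obtain ⟨g, hg, rfl⟩ := hN
    exact (hgate j g hg).1
  have hq : ∀ x, q x = (List.ofFn M).prod x x0 := by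
    intro x
    show ((List.ofFn M).prod.mulVec _) x = _
    simp only [Matrix.mulVec, dotProduct]
    rw [Finset.sum_eq_single x0 (fun b _ hb => by simp [hb]) (by simp)]
    simp
  have hq0 : ∀ x, 0 ≤ q x := fun x => (hq x) ▸ hPs.1 x x0
  have hq1 : ∑ x, q x = 1 := by
    rw [Finset.sum_congr rfl fun x _ => hq x]
    exact hPs.2 x0
  have hE : ∀ F : (∀ i, A i) → ℝ, ∑ x, q x * F x = Tr (List.ofFn M).prod F x0 := by
    intro F
    have h1 : ∑ x, q x * F x
        = ∑ y, (if y = x0 then (1:ℝ) else 0) * Tr (List.ofFn M).prod F y :=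
      expectation_mulVec _ _ F
    rw [h1, Finset.sum_eq_single x0 (fun b _ hb => by simp [hb]) (by simp)]
    simp
  have habs : ∀ F : (∀ i, A i) → ℝ, (∀ x, |F x| ≤ 1) → |∑ x, q x * F x| ≤ 1 := by
    intro F hF
    calc |∑ x, q x * F x| ≤ ∑ x, |q x * F x| := Finset.abs_sum_le_sum_abs _ _
      _ ≤ ∑ x, q x := by
          refine Finset.sum_le_sum fun x _ => ?_
          rw [abs_mul, abs_of_nonneg (hq0 x)]
          calc q x * |F x| ≤ q x * 1 := mul_le_mul_of_nonneg_left (hF x) (hq0 x)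
            _ = q x := mul_one _
      _ = 1 := hq1
  have hcov : ∀ i j, Disjoint (coneChain Ls (s i)) (coneChain Ls (s j)) →
      ∑ x, q x * (f i x * f j x) = (∑ x, q x * f i x) * (∑ x, q x * f j x) := by
    intro i j hdisj
    have hc := (chain_factor ls hl (s i) (s j) (f i) (f j) (hsupp i) (hsupp j) hdisj).1
    have e1 : ∑ x, q x * (f i x * f j x) = Tr (List.ofFn M).prod (f i * f j) x0 := hE _
    rw [e1, hE (f i), hE (f j), hP, hc]
    rfl
  -- counting bound
  have hsj : ∀ a : Fin n, (Finset.univ.filter fun j => a ∈ s j).card ≤ D := by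
    intro a
    rcases Finset.eq_empty_or_nonempty (Finset.univ.filter fun j => a ∈ s j) with he | ⟨j0, hj0⟩
    · simp [he]
    · rw [Finset.mem_filter] at hj0
      refine le_trans (Finset.card_le_card ?_) (hD j0)
      intro j hj
      rw [Finset.mem_filter] at hj ⊢
      exact ⟨hj.1, Finset.not_disjoint_iff.2 ⟨a, hj0.2, hj.2⟩⟩
  have hcount : ∀ i, (Finset.univ.filter fun j =>
      ¬ Disjoint (coneChain Ls (s i)) (coneChain Ls (s j))).card
      ≤ ℓ * 2 ^ k * (2 ^ k * D) := by
    intro i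
    have hsub : (Finset.univ.filter fun j =>
        ¬ Disjoint (coneChain Ls (s i)) (coneChain Ls (s j)))
        ⊆ (coneChain Ls (s i)).biUnion (fun c => (bChain Ls c).biUnion
            (fun a => Finset.univ.filter (fun j => a ∈ s j))) := by
      intro j hj
      rw [Finset.mem_filter] at hj
      obtain ⟨c, hc1, hc2⟩ := Finset.not_disjoint_iff.1 hj.2
      obtain ⟨a, ha, haj⟩ := mem_coneChain.1 hc2
      exact Finset.mem_biUnion.2 ⟨c, hc1, Finset.mem_biUnion.2
        ⟨a, ha, Finset.mem_filter.2 ⟨Finset.mem_univ _, haj⟩⟩⟩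
    refine le_trans (Finset.card_le_card hsub) ?_
    refine le_trans Finset.card_biUnion_le ?_
    have inner : ∀ c, ((bChain Ls c).biUnion
        (fun a => Finset.univ.filter (fun j => a ∈ s j))).card ≤ 2 ^ k * D := by
      intro c
      refine le_trans Finset.card_biUnion_le ?_
      calc ∑ a ∈ bChain Ls c, (Finset.univ.filter (fun j => a ∈ s j)).card
          ≤ ∑ _a ∈ bChain Ls c, D := Finset.sum_le_sum fun a _ => hsj a
        _ = (bChain Ls c).card * D := by rw [Finset.sum_const, smul_eq_mul]
        _ ≤ 2 ^ k * D := Nat.mul_le_mul_right _ (hlen ▸ card_bChain hp2 c)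
    calc ∑ c ∈ coneChain Ls (s i), ((bChain Ls c).biUnion
          (fun a => Finset.univ.filter (fun j => a ∈ s j))).card
        ≤ ∑ _c ∈ coneChain Ls (s i), 2 ^ k * D := Finset.sum_le_sum fun c _ => inner c
      _ = (coneChain Ls (s i)).card * (2 ^ k * D) := by rw [Finset.sum_const, smul_eq_mul]
      _ ≤ ℓ * 2 ^ k * (2 ^ k * D) := by
          refine Nat.mul_le_mul_right _ ?_
          calc (coneChain Ls (s i)).card ≤ (s i).card * 2 ^ Ls.length :=
                card_coneChain hp2 _
            _ ≤ ℓ * 2 ^ k := by rw [hlen]; exact Nat.mul_le_mul_right _ (hcard i)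
  -- unbiasedness
  have hunb : ∑ x, q x * Y x = L := by
    show ∑ x, q x * ∑ i, p i * f i x = ∑ i, p i * ∑ x, q x * f i x
    simp only [Finset.mul_sum]
    rw [Finset.sum_comm]
    exact Finset.sum_congr rfl fun i _ => Finset.sum_congr rfl fun x _ => by ring
  refine ⟨hunb, ?_⟩
  -- variance
  have hveq : ∑ x, q x * (Y x - L) ^ 2 = ∑ i, ∑ j, p i * p j *
      ((∑ x, q x * (f i x * f j x)) - (∑ x, q x * f i x) * (∑ x, q x * f j x)) :=
    var_eq q hq1 p f
  rw [hveq]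
  refine le_trans (var_bound p
    (fun i j => (∑ x, q x * (f i x * f j x)) - (∑ x, q x * f i x) * (∑ x, q x * f j x))
    (fun i j => ¬ Disjoint (coneChain Ls (s i)) (coneChain Ls (s j)))
    ?_ ?_ ?_ (ℓ * 2 ^ k * (2 ^ k * D)) ?_) (le_of_eq ?_)
  · intro i j
    exact not_congr disjoint_comm
  · intro i j h
    have h' : Disjoint (coneChain Ls (s i)) (coneChain Ls (s j)) := not_not.1 h
    show (∑ x, q x * (f i x * f j x)) - (∑ x, q x * f i x) * (∑ x, q x * f j x) = 0
    rw [hcov i j h', sub_self]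
  · intro i j
    show |(∑ x, q x * (f i x * f j x)) - (∑ x, q x * f i x) * (∑ x, q x * f j x)| ≤ 2
    calc |(∑ x, q x * (f i x * f j x)) - (∑ x, q x * f i x) * (∑ x, q x * f j x)|
        ≤ |∑ x, q x * (f i x * f j x)| + |(∑ x, q x * f i x) * (∑ x, q x * f j x)| :=
          abs_sub _ _
      _ ≤ 1 + 1 := by
          refine add_le_add (habs _ fun x => ?_) ?_
          · rw [abs_mul]
            exact mul_le_one₀ (hbound i x) (abs_nonneg _) (hbound j x)
          · rw [abs_mul]
            exact mul_le_one₀ (habs _ (hbound i)) (abs_nonneg _) (habs _ (hbound j))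
      _ = 2 := by norm_num
  · intro i
    convert hcount i using 2
    ext j
    simp only [Finset.mem_filter]
  · push_cast
    ring
end
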